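/- Let S be a Hermiticity-preserving linear map from d×d complex matrices to m×m complex matrices. Then ‖S‖_⋄ = d·‖S‖_ME if and only if there exists a unit vector φ ∈ ℂ^d such that M(S) = ‖J(S)‖₁ · φφᴴ (the M-operator is ‖J(S)‖₁ times the rank-one orthogonal projection onto the span of φ). -/

import Mathlib

open Matrix Kronecker ComplexOrder

noncomputable section

/-- The positive semidefinite square root of a PSD matrix (the Mathlib definition of
December 2024, since removed from Mathlib). -/
noncomputable def Matrix.PosSemidef.sqrt {n : Type*} [Fintype n] [DecidableEq n]
    {A : Matrix n n ℂ} (hA : A.PosSemidef) : Matrix n n ℂ :=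
  hA.1.eigenvectorUnitary.1 * diagonal ((↑) ∘ Real.sqrt ∘ hA.1.eigenvalues) *
    (star hA.1.eigenvectorUnitary : Matrix n n ℂ)

/-- The matrix absolute value `|A| = √(AᴴA)`. -/
noncomputable def matAbs {n : Type*} [Fintype n] [DecidableEq n] (A : Matrix n n ℂ) :
    Matrix n n ℂ :=
  (Matrix.posSemidef_conjTranspose_mul_self A).sqrt

/-- The trace norm `‖A‖₁ = Tr √(AᴴA)`. -/
noncomputable def traceNorm {n : Type*} [Fintype n] [DecidableEq n] (A : Matrix n n ℂ) : ℝ :=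
  ((matAbs A).trace).re

/-- The positive semidefinite square root of a PSD matrix (zero otherwise). -/
noncomputable def matSqrt {n : Type*} [Fintype n] [DecidableEq n] (σ : Matrix n n ℂ) :
    Matrix n n ℂ :=
  open scoped Classical in
  if h : σ.PosSemidef then h.sqrt else 0

/-- A density matrix: positive semidefinite with unit trace. -/
def IsDensity {n : Type*} [Fintype n] [DecidableEq n] (σ : Matrix n n ℂ) : Prop :=
  σ.PosSemidef ∧ σ.trace = 1

/-- The Choi operator of a linear map between matrix algebras. -/
noncomputable def choi {d m : ℕ}
    (S : Matrix (Fin d) (Fin d) ℂ →ₗ[ℂ] Matrix (Fin m) (Fin m) ℂ) :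
    Matrix (Fin m × Fin d) (Fin m × Fin d) ℂ :=
  ∑ i : Fin d, ∑ j : Fin d,
    (S (Matrix.single i j 1)) ⊗ₖ (Matrix.single i j 1)

/-- The ME-norm `‖S‖_ME = ‖J(S)‖₁ / d`. -/
noncomputable def MENorm {d m : ℕ}
    (S : Matrix (Fin d) (Fin d) ℂ →ₗ[ℂ] Matrix (Fin m) (Fin m) ℂ) : ℝ :=
  traceNorm (choi S) / d

/-- The diamond norm: supremum over density matrices σ of
`‖(1 ⊗ √σ) J(S) (1 ⊗ √σ)‖₁`. -/
noncomputable def diamondNorm {d m : ℕ}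
    (S : Matrix (Fin d) (Fin d) ℂ →ₗ[ℂ] Matrix (Fin m) (Fin m) ℂ) : ℝ :=
  ⨆ σ : {σ : Matrix (Fin d) (Fin d) ℂ // IsDensity σ},
    traceNorm (((1 : Matrix (Fin m) (Fin m) ℂ) ⊗ₖ matSqrt σ.1) * choi S *
      ((1 : Matrix (Fin m) (Fin m) ℂ) ⊗ₖ matSqrt σ.1))

/-- The M-operator `M(S) = Tr_B |J(S)|`. -/
noncomputable def Mop {d m : ℕ}
    (S : Matrix (Fin d) (Fin d) ℂ →ₗ[ℂ] Matrix (Fin m) (Fin m) ℂ) :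
    Matrix (Fin d) (Fin d) ℂ :=
  Matrix.of fun k l => ∑ b : Fin m, matAbs (choi S) (b, k) (b, l)

/-- A quantum channel: completely positive (PSD Choi operator, by Choi's theorem)
and trace preserving. -/
def IsQChannel {d m : ℕ}
    (S : Matrix (Fin d) (Fin d) ℂ →ₗ[ℂ] Matrix (Fin m) (Fin m) ℂ) : Prop :=
  (choi S).PosSemidef ∧ ∀ ρ : Matrix (Fin d) (Fin d) ℂ, (S ρ).trace = ρ.trace




section Helpers

variable {n : Type*} [Fintype n] [DecidableEq n]

lemma spectral_theorem_old {A : Matrix n n ℂ} (hA : A.IsHermitian) :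
    A = (hA.eigenvectorUnitary : Matrix n n ℂ) * diagonal (RCLike.ofReal ∘ hA.eigenvalues) *
      (star (hA.eigenvectorUnitary : Matrix n n ℂ)) := hA.spectral_theorem

lemma Matrix.IsHermitian.star_mul_self_mul_eq_diagonal {A : Matrix n n ℂ} (hA : A.IsHermitian) :
    star (hA.eigenvectorUnitary : Matrix n n ℂ) * A * (hA.eigenvectorUnitary : Matrix n n ℂ) =
      diagonal (RCLike.ofReal ∘ hA.eigenvalues) := by
  have h : star (hA.eigenvectorUnitary : Matrix n n ℂ) * (hA.eigenvectorUnitary : Matrix n n ℂ)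
    = 1 := Unitary.coe_star_mul_self _
  calc star (hA.eigenvectorUnitary : Matrix n n ℂ) * A * (hA.eigenvectorUnitary : Matrix n n ℂ)
      = star (hA.eigenvectorUnitary : Matrix n n ℂ) * ((hA.eigenvectorUnitary : Matrix n n ℂ) *
          diagonal (RCLike.ofReal ∘ hA.eigenvalues) * (star (hA.eigenvectorUnitary : Matrix n n ℂ)))
          * (hA.eigenvectorUnitary : Matrix n n ℂ) :=
        congrArg (fun X => star (hA.eigenvectorUnitary : Matrix n n ℂ) * X *
          (hA.eigenvectorUnitary : Matrix n n ℂ)) (spectral_theorem_old hA)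
    _ = diagonal (RCLike.ofReal ∘ hA.eigenvalues) := by
      simp only [Matrix.mul_assoc, h, Matrix.mul_one]
      rw [← Matrix.mul_assoc, h, Matrix.one_mul]

lemma trace_eq_sum_eig {A : Matrix n n ℂ} (hA : A.IsHermitian) :
    A.trace = ∑ i, (hA.eigenvalues i : ℂ) := by
  conv_lhs => rw [spectral_theorem_old hA]
  rw [Matrix.trace_mul_cycle, Unitary.coe_star_mul_self, Matrix.one_mul, Matrix.trace_diagonal]
  simp

lemma ofReal_nonneg' {r : ℝ} (h : 0 ≤ r) : (0:ℂ) ≤ (r:ℂ) := by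
  rw [Complex.le_def]
  simp [h]

lemma conj_mul_conj (U : Matrix.unitaryGroup n ℂ) (A B : Matrix n n ℂ) :
    ((U : Matrix n n ℂ) * A * star (U : Matrix n n ℂ)) *
      ((U : Matrix n n ℂ) * B * star (U : Matrix n n ℂ)) =
    (U : Matrix n n ℂ) * (A * B) * star (U : Matrix n n ℂ) := by
  have h : star (U : Matrix n n ℂ) * (U : Matrix n n ℂ) = 1 := Unitary.coe_star_mul_self U
  simp only [Matrix.mul_assoc]
  rw [← Matrix.mul_assoc (star (U : Matrix n n ℂ)) (U : Matrix n n ℂ), h, Matrix.one_mul]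

lemma psd_conj_diag {f : n → ℝ} (hf : ∀ i, 0 ≤ f i) (U : Matrix.unitaryGroup n ℂ) :
    ((U : Matrix n n ℂ) * diagonal (fun i => ((f i : ℝ) : ℂ)) *
      (star (U : Matrix n n ℂ))).PosSemidef := by
  have hd : (diagonal (fun i => ((f i : ℝ) : ℂ))).PosSemidef :=
    Matrix.PosSemidef.diagonal fun i => ofReal_nonneg' (hf i)
  simpa [Matrix.star_eq_conjTranspose] using hd.mul_mul_conjTranspose_same (U : Matrix n n ℂ)

lemma Matrix.PosSemidef.sqrt_def' {A : Matrix n n ℂ} (hA : A.PosSemidef) :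
    hA.sqrt = (hA.1.eigenvectorUnitary : Matrix n n ℂ) *
      diagonal (fun i => ((Real.sqrt (hA.1.eigenvalues i) : ℝ) : ℂ)) *
      (star (hA.1.eigenvectorUnitary : Matrix n n ℂ)) := rfl

lemma Matrix.PosSemidef.posSemidef_sqrt {A : Matrix n n ℂ} (hA : A.PosSemidef) :
    hA.sqrt.PosSemidef := by
  rw [hA.sqrt_def']
  exact psd_conj_diag (fun i => Real.sqrt_nonneg _) _

lemma Matrix.PosSemidef.sqrt_mul_self {A : Matrix n n ℂ} (hA : A.PosSemidef) :
    hA.sqrt * hA.sqrt = A := by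
  rw [hA.sqrt_def', conj_mul_conj, Matrix.diagonal_mul_diagonal]
  conv_rhs => rw [spectral_theorem_old hA.1]
  congr 2
  congr 1
  funext i
  rw [← Complex.ofReal_mul, Real.mul_self_sqrt (hA.eigenvalues_nonneg i)]
  rfl

open scoped MatrixOrder in
lemma Matrix.PosSemidef.sqrt_eq_cfc {A : Matrix n n ℂ} (hA : A.PosSemidef) :
    hA.sqrt = CFC.sqrt A := by
  rw [CFC.sqrt_eq_cfc, cfc_nnreal_eq_real _ A, hA.1.cfc_eq, hA.sqrt_def']
  simp only [IsHermitian.cfc, Unitary.conjStarAlgAut_apply, Real.sqrt]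
  rfl

open scoped MatrixOrder in
lemma Matrix.PosSemidef.eq_sqrt_of_sq_eq {A : Matrix n n ℂ} (hA : A.PosSemidef)
    {B : Matrix n n ℂ} (hB : B.PosSemidef) (h : A ^ 2 = B) : A = hB.sqrt := by
  rw [hB.sqrt_eq_cfc]
  exact (CFC.sqrt_unique (by rw [← pow_two]; exact h) (Matrix.nonneg_iff_posSemidef.2 hA)).symm

lemma matAbs_eq_spectral {A : Matrix n n ℂ} (hA : A.IsHermitian) :
    (Matrix.posSemidef_conjTranspose_mul_self A).sqrt =
      (hA.eigenvectorUnitary : Matrix n n ℂ) *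
        diagonal (fun i => ((|hA.eigenvalues i| : ℝ) : ℂ)) *
        (star (hA.eigenvectorUnitary : Matrix n n ℂ)) := by
  symm
  apply Matrix.PosSemidef.eq_sqrt_of_sq_eq (psd_conj_diag (fun i => abs_nonneg _) _)
  rw [pow_two, conj_mul_conj, Matrix.diagonal_mul_diagonal, hA.eq]
  conv_rhs => rw [spectral_theorem_old hA]
  rw [conj_mul_conj, Matrix.diagonal_mul_diagonal]
  congr 1
  congr 1
  congr 1
  funext i
  simp only [Function.comp_apply]
  have h := congrArg (fun x : ℝ => (x : ℂ)) (abs_mul_abs_self (hA.eigenvalues i))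
  simp only [Complex.ofReal_mul] at h
  exact h


lemma matAbs_posSemidef (A : Matrix n n ℂ) : (matAbs A).PosSemidef :=
  (Matrix.posSemidef_conjTranspose_mul_self A).posSemidef_sqrt

lemma matAbs_isHermitian (A : Matrix n n ℂ) : (matAbs A).IsHermitian :=
  (matAbs_posSemidef A).1

lemma matAbs_mul_self {A : Matrix n n ℂ} : matAbs A * matAbs A = Aᴴ * A :=
  (Matrix.posSemidef_conjTranspose_mul_self A).sqrt_mul_self

lemma trace_conj_diag (U : Matrix.unitaryGroup n ℂ) (f : n → ℂ) :
    ((U : Matrix n n ℂ) * diagonal f * star (U : Matrix n n ℂ)).trace = ∑ i, f i := by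
  rw [Matrix.trace_mul_cycle, Unitary.coe_star_mul_self, Matrix.one_mul, Matrix.trace_diagonal]

lemma traceNorm_herm_eq {A : Matrix n n ℂ} (hA : A.IsHermitian) :
    traceNorm A = ∑ i, |hA.eigenvalues i| := by
  rw [traceNorm, matAbs, matAbs_eq_spectral hA, trace_conj_diag]
  simp

lemma matAbs_of_posSemidef {A : Matrix n n ℂ} (hA : A.PosSemidef) : matAbs A = A := by
  rw [matAbs]
  exact (hA.eq_sqrt_of_sq_eq (Matrix.posSemidef_conjTranspose_mul_self A)
    (by rw [pow_two, hA.1])).symm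

lemma traceNorm_of_posSemidef {A : Matrix n n ℂ} (hA : A.PosSemidef) :
    traceNorm A = A.trace.re := by
  rw [traceNorm, matAbs_of_posSemidef hA]

lemma psd_trace_eq {A : Matrix n n ℂ} (hA : A.PosSemidef) :
    A.trace = ((∑ i, hA.1.eigenvalues i : ℝ) : ℂ) := by
  rw [trace_eq_sum_eig hA.1]
  push_cast
  rfl

lemma psd_trace_re_nonneg {A : Matrix n n ℂ} (hA : A.PosSemidef) : 0 ≤ A.trace.re := by
  rw [psd_trace_eq hA]
  simp only [Complex.ofReal_re]
  exact Finset.sum_nonneg fun i _ => hA.eigenvalues_nonneg i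

lemma psd_trace_ofReal_re {A : Matrix n n ℂ} (hA : A.PosSemidef) :
    A.trace = ((A.trace.re : ℝ) : ℂ) := by
  rw [psd_trace_eq hA]
  simp

lemma psd_trace_zero_eq_zero {A : Matrix n n ℂ} (hA : A.PosSemidef)
    (h : A.trace.re = 0) : A = 0 := by
  have hsum : ∑ i, hA.1.eigenvalues i = 0 := by
    have := psd_trace_eq hA
    rw [this] at h
    simpa using h
  have hzero : ∀ i ∈ Finset.univ, hA.1.eigenvalues i = 0 :=
    (Finset.sum_eq_zero_iff_of_nonneg (fun i _ => hA.eigenvalues_nonneg i)).1 hsum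
  have hdiag : Matrix.diagonal (RCLike.ofReal ∘ hA.1.eigenvalues) = (0 : Matrix n n ℂ) := by
    ext i j
    rcases eq_or_ne i j with hij | hij
    · subst hij
      simp [hzero i (Finset.mem_univ i)]
    · simp [Matrix.diagonal_apply_ne _ hij]
  have := hA.1.spectral_theorem
  rw [hdiag] at this
  simpa using this

lemma psd_mul_trace_re_nonneg {A B : Matrix n n ℂ} (hA : A.PosSemidef) (hB : B.PosSemidef) :
    0 ≤ (A * B).trace.re := by
  have hs := hA.sqrt_mul_self
  have h1 : (A * B).trace = (hA.sqrt * B * hA.sqrt).trace := by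
    conv_lhs => rw [← hs]
    rw [Matrix.mul_assoc, Matrix.trace_mul_comm]
  rw [h1]
  have hpsd : (hA.sqrt * B * hA.sqrt).PosSemidef := by
    have := hB.mul_mul_conjTranspose_same hA.sqrt
    rwa [hA.posSemidef_sqrt.1.eq] at this
  exact psd_trace_re_nonneg hpsd


lemma herm_XJX {J X : Matrix n n ℂ} (hJ : J.IsHermitian) (hX : X.IsHermitian) :
    (X * J * X).IsHermitian := by
  unfold Matrix.IsHermitian
  rw [Matrix.conjTranspose_mul, Matrix.conjTranspose_mul, hJ.eq, hX.eq, Matrix.mul_assoc]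

lemma keyIneq {J X : Matrix n n ℂ} (hJ : J.IsHermitian) (hX : X.IsHermitian) :
    traceNorm (X * J * X) ≤ ((matAbs J) * (X * X)).trace.re := by
  classical
  have hH : (X * J * X).IsHermitian := herm_XJX hJ hX
  obtain ⟨W, hWW, hWdiag⟩ :
      ∃ W : Matrix n n ℂ, W * star W = 1 ∧
        star W * (X * J * X) * W = Matrix.diagonal (RCLike.ofReal ∘ hH.eigenvalues) :=
    ⟨(hH.eigenvectorUnitary : Matrix n n ℂ), Unitary.coe_mul_star_self _,
      hH.star_mul_self_mul_eq_diagonal⟩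
  obtain ⟨V, hVV, hJspec, hAbs⟩ :
      ∃ V : Matrix n n ℂ, V * star V = 1 ∧
        (J = V * Matrix.diagonal (RCLike.ofReal ∘ hJ.eigenvalues) * star V) ∧
        matAbs J = V * Matrix.diagonal (fun i => ((|hJ.eigenvalues i| : ℝ) : ℂ)) * star V :=
    ⟨(hJ.eigenvectorUnitary : Matrix n n ℂ), Unitary.coe_mul_star_self _,
      hJ.spectral_theorem, matAbs_eq_spectral hJ⟩
  set lam := hJ.eigenvalues with hlam
  set mu := hH.eigenvalues with hmu
  set C : Matrix n n ℂ := star V * X * W with hC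
  have hCt : Cᴴ = star W * X * V := by
    rw [hC]
    simp only [Matrix.conjTranspose_mul, Matrix.star_eq_conjTranspose,
      Matrix.conjTranspose_conjTranspose, hX.eq, Matrix.mul_assoc]
  have h1 : Cᴴ * Matrix.diagonal (RCLike.ofReal ∘ lam) * C =
      Matrix.diagonal (RCLike.ofReal ∘ mu) := by
    rw [← hWdiag, hCt, hC]
    conv_rhs => rw [hJspec]
    simp only [Matrix.mul_assoc]
  have h2 : C * Cᴴ = star V * (X * X) * V := by
    rw [hCt, hC]
    simp only [Matrix.mul_assoc]
    rw [← Matrix.mul_assoc W (star W), hWW, Matrix.one_mul]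
  -- entrywise: mu j = ∑ i, lam i * normSq (C i j)
  have hmuj : ∀ j, mu j = ∑ i, lam i * Complex.normSq (C i j) := by
    intro j
    have h3 := congrArg (fun M : Matrix n n ℂ => (M j j).re) h1
    simp only [Matrix.diagonal_apply_eq, Function.comp_apply] at h3
    rw [Matrix.mul_apply] at h3
    simp only [Matrix.mul_diagonal, Matrix.conjTranspose_apply] at h3
    have h4 : ((RCLike.ofReal (mu j) : ℂ)).re = mu j := by simp
    rw [← h4, ← h3, Complex.re_sum]
    refine Finset.sum_congr rfl fun i _ => ?_
    simp only [Function.comp_apply]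
    rw [mul_comm (star (C i j)), mul_assoc, Complex.star_def,
      ← Complex.normSq_eq_conj_mul_self]
    simp
  -- column sums: ∑ j, normSq (C i j) = re ((C * Cᴴ) i i)
  have hcol : ∀ i, ∑ j, Complex.normSq (C i j) = ((star V * (X * X) * V) i i).re := by
    intro i
    rw [← h2, Matrix.mul_apply]
    rw [Complex.re_sum]
    refine Finset.sum_congr rfl fun j _ => ?_
    rw [Matrix.conjTranspose_apply, Complex.star_def, Complex.mul_conj]
    simp
  -- RHS
  have hRHS : ((matAbs J) * (X * X)).trace =
      ∑ i, ((|lam i| : ℝ) : ℂ) * (star V * (X * X) * V) i i := by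
    have e1 : matAbs J * (X * X) =
        V * ((Matrix.diagonal fun i => ((|lam i| : ℝ) : ℂ)) * (star V * (X * X))) := by
      rw [hAbs]; simp only [Matrix.mul_assoc]
    rw [e1, Matrix.trace_mul_comm, Matrix.mul_assoc, Matrix.trace]
    simp only [Matrix.diag_apply, Matrix.diagonal_mul]
  -- put it together
  calc traceNorm (X * J * X) = ∑ j, |mu j| := traceNorm_herm_eq hH
    _ ≤ ∑ j, ∑ i, |lam i| * Complex.normSq (C i j) := by
        refine Finset.sum_le_sum fun j _ => ?_
        rw [hmuj j]
        refine (Finset.abs_sum_le_sum_abs _ _).trans ?_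
        refine Finset.sum_le_sum fun i _ => ?_
        rw [abs_mul, abs_of_nonneg (Complex.normSq_nonneg _)]
    _ = ∑ i, |lam i| * ((star V * (X * X) * V) i i).re := by
        rw [Finset.sum_comm]
        refine Finset.sum_congr rfl fun i _ => ?_
        rw [← Finset.mul_sum, hcol i]
    _ = ((matAbs J) * (X * X)).trace.re := by
        rw [hRHS, Complex.re_sum]
        refine Finset.sum_congr rfl fun i _ => ?_
        simp


lemma psd_diag_re_nonneg {A : Matrix n n ℂ} (hA : A.PosSemidef) (i : n) : 0 ≤ (A i i).re := by
  have h := hA.re_dotProduct_nonneg (Pi.single i 1)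
  simpa [dotProduct, Matrix.mulVec, Pi.single_apply, Finset.sum_ite_eq,
    apply_ite, mul_ite, ite_mul] using h

lemma psd_sum {ι : Type*} (s : Finset ι) (f : ι → Matrix n n ℂ)
    (hf : ∀ i ∈ s, (f i).PosSemidef) : (∑ i ∈ s, f i).PosSemidef := by
  classical
  induction s using Finset.induction_on with
  | empty => simpa using Matrix.PosSemidef.zero
  | insert a t hnot ih =>
    rw [Finset.sum_insert hnot]
    exact (hf a (Finset.mem_insert_self a t)).add
      (ih fun i hi => hf i (Finset.mem_insert_of_mem hi))

lemma vecMulVec_idem {φ : n → ℂ} (hφ : star φ ⬝ᵥ φ = 1) :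
    Matrix.vecMulVec φ (star φ) * Matrix.vecMulVec φ (star φ) = Matrix.vecMulVec φ (star φ) := by
  ext k l
  simp only [Matrix.mul_apply, Matrix.vecMulVec_apply, Pi.star_apply]
  have h1 : ∀ j, (φ k * star (φ j)) * (φ j * star (φ l)) =
      (φ k * star (φ l)) * (star (φ j) * φ j) := fun j => by ring
  rw [Finset.sum_congr rfl fun j _ => h1 j, ← Finset.mul_sum]
  have h2 : ∑ j, star (φ j) * φ j = 1 := hφ
  rw [h2, mul_one]

lemma density_vecMulVec {φ : n → ℂ} (hφ : star φ ⬝ᵥ φ = 1) :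
    IsDensity (Matrix.vecMulVec φ (star φ)) := by
  constructor
  · refine Matrix.PosSemidef.of_dotProduct_mulVec_nonneg ?_ ?_
    · ext k l
      simp only [Matrix.conjTranspose_apply, Matrix.vecMulVec_apply, Pi.star_apply, star_mul',
        star_star]
      ring
    · intro x
      have hv : (Matrix.vecMulVec φ (star φ)) *ᵥ x = (star φ ⬝ᵥ x) • φ := by
        ext k
        simp only [Matrix.mulVec, dotProduct, Matrix.vecMulVec_apply, Pi.star_apply,
          Pi.smul_apply, smul_eq_mul]
        rw [Finset.sum_mul]
        exact Finset.sum_congr rfl fun j _ => by ring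
      rw [hv]
      have h3 : star x ⬝ᵥ φ = star (star φ ⬝ᵥ x) := by
        simp only [dotProduct, Pi.star_apply, star_sum, star_mul', star_star]
        exact Finset.sum_congr rfl fun j _ => by ring
      rw [dotProduct_smul, smul_eq_mul, h3]
      exact mul_star_self_nonneg _
  · have : (Matrix.vecMulVec φ (star φ)).trace = ∑ k, φ k * star (φ k) := by
      simp [Matrix.trace, Matrix.diag, Matrix.vecMulVec_apply]
    rw [this, ← hφ]
    simp only [dotProduct, Pi.star_apply]
    exact Finset.sum_congr rfl fun j _ => mul_comm _ _

lemma matSqrt_proj {P : Matrix n n ℂ} (hP : P.PosSemidef) (hidem : P * P = P) :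
    matSqrt P = P := by
  rw [matSqrt, dif_pos hP]
  exact (hP.eq_sqrt_of_sq_eq hP (by rw [pow_two, hidem])).symm

lemma rank_one_of_eig {M : Matrix n n ℂ} (hM : M.PosSemidef) (i₀ : n)
    (hz : ∀ i, i ≠ i₀ → hM.1.eigenvalues i = 0) :
    ∃ φ : n → ℂ, star φ ⬝ᵥ φ = 1 ∧
      M = ((hM.1.eigenvalues i₀ : ℝ) : ℂ) • Matrix.vecMulVec φ (star φ) := by
  set V : Matrix n n ℂ := (hM.1.eigenvectorUnitary : Matrix n n ℂ) with hV
  refine ⟨fun k => V k i₀, ?_, ?_⟩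
  · have h := congrFun (congrFun (Unitary.coe_star_mul_self hM.1.eigenvectorUnitary) i₀) i₀
    rw [← hV] at h
    simp only [Matrix.one_apply_eq] at h
    rw [← h, Matrix.mul_apply]
    simp [dotProduct, Matrix.star_eq_conjTranspose, Matrix.conjTranspose_apply]
  · have hspec := spectral_theorem_old hM.1
    rw [← hV] at hspec
    ext k l
    conv_lhs => rw [hspec]
    rw [Matrix.mul_apply]
    have hent : ∀ i, ((V * Matrix.diagonal (RCLike.ofReal ∘ hM.1.eigenvalues) :
        Matrix n n ℂ)) k i * (star V) i l
        = V k i * ((hM.1.eigenvalues i : ℝ) : ℂ) * star (V l i) := by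
      intro i
      rw [Matrix.mul_diagonal]
      simp [Matrix.star_eq_conjTranspose, Matrix.conjTranspose_apply]
    rw [Finset.sum_congr rfl fun i _ => hent i]
    rw [Finset.sum_eq_single i₀]
    · simp only [Matrix.smul_apply, Matrix.vecMulVec_apply, Pi.star_apply, smul_eq_mul]
      ring
    · intro i _ hne
      rw [hz i hne]
      simp
    · intro h
      exact absurd (Finset.mem_univ i₀) h


lemma trace_mul_density_le {M σ : Matrix n n ℂ} (hM : M.PosSemidef) (hσ : IsDensity σ)
    {lmax : ℝ} (hl : ∀ i, hM.1.eigenvalues i ≤ lmax) : (M * σ).trace.re ≤ lmax := by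
  obtain ⟨V, hVV, hspec⟩ :
      ∃ V : Matrix n n ℂ, V * star V = 1 ∧
        M = V * Matrix.diagonal (RCLike.ofReal ∘ hM.1.eigenvalues) * star V :=
    ⟨_, Unitary.coe_mul_star_self _, hM.1.spectral_theorem⟩
  set lam := hM.1.eigenvalues with hlam
  set Z : Matrix n n ℂ := star V * σ * V with hZ
  have hZpsd : Z.PosSemidef := by
    have h := hσ.1.conjTranspose_mul_mul_same V
    rwa [← Matrix.star_eq_conjTranspose] at h
  have htr : (M * σ).trace = (Matrix.diagonal (RCLike.ofReal ∘ lam) * Z).trace := by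
    rw [hspec]
    have e1 : (V * Matrix.diagonal (RCLike.ofReal ∘ lam) * star V) * σ =
        V * (Matrix.diagonal (RCLike.ofReal ∘ lam) * (star V * σ)) := by
      simp only [Matrix.mul_assoc]
    rw [e1, Matrix.trace_mul_comm, hZ]
    simp only [Matrix.mul_assoc]
  have hdiag : (Matrix.diagonal (RCLike.ofReal ∘ lam) * Z).trace
      = ∑ i, ((lam i : ℝ) : ℂ) * Z i i := by
    rw [Matrix.trace]
    refine Finset.sum_congr rfl fun i _ => ?_
    simp [Matrix.diag_apply, Matrix.diagonal_mul]
  have hZtr : ∑ i, (Z i i).re = 1 := by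
    have h1 : Z.trace = σ.trace := by
      rw [hZ, Matrix.trace_mul_cycle, hVV, Matrix.one_mul]
    have h2 : Z.trace = 1 := by rw [h1, hσ.2]
    have h3 : Z.trace.re = 1 := by rw [h2]; rfl
    rw [← h3, Matrix.trace, Complex.re_sum]
    rfl
  rw [htr, hdiag, Complex.re_sum]
  calc ∑ i, (((lam i : ℝ) : ℂ) * Z i i).re ≤ ∑ i, lmax * (Z i i).re := by
        refine Finset.sum_le_sum fun i _ => ?_
        have hre : (((lam i : ℝ) : ℂ) * Z i i).re = lam i * (Z i i).re := by simp
        rw [hre]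
        exact mul_le_mul_of_nonneg_right (hl i) (psd_diag_re_nonneg hZpsd i)
    _ = lmax * ∑ i, (Z i i).re := by rw [Finset.mul_sum]
    _ = lmax := by rw [hZtr, mul_one]

end Helpers

section Specific

variable {d m : ℕ}

lemma kron_one_herm {B : Matrix (Fin d) (Fin d) ℂ} (hB : B.IsHermitian) :
    ((1 : Matrix (Fin m) (Fin m) ℂ) ⊗ₖ B).IsHermitian := by
  unfold Matrix.IsHermitian
  ext ⟨a, k⟩ ⟨b, l⟩
  simp only [Matrix.conjTranspose_apply, Matrix.kroneckerMap_apply, Matrix.one_apply, star_mul',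
    apply_ite, star_one, star_zero]
  rw [← Matrix.conjTranspose_apply, hB.eq]
  by_cases h : b = a
  · subst h; simp
  · simp [h, Ne.symm h]

lemma pairing (A : Matrix (Fin m × Fin d) (Fin m × Fin d) ℂ) (τ : Matrix (Fin d) (Fin d) ℂ) :
    (A * ((1 : Matrix (Fin m) (Fin m) ℂ) ⊗ₖ τ)).trace
      = ((Matrix.of fun k l => ∑ b, A (b, k) (b, l)) * τ).trace := by
  have lhs : (A * ((1 : Matrix (Fin m) (Fin m) ℂ) ⊗ₖ τ)).trace
      = ∑ b : Fin m, ∑ k : Fin d, ∑ l : Fin d, A (b, k) (b, l) * τ l k := by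
    rw [Matrix.trace, Fintype.sum_prod_type]
    refine Finset.sum_congr rfl fun b _ => Finset.sum_congr rfl fun k _ => ?_
    rw [Matrix.diag_apply, Matrix.mul_apply, Fintype.sum_prod_type, Finset.sum_comm]
    refine Finset.sum_congr rfl fun l _ => ?_
    rw [Finset.sum_eq_single b]
    · simp [Matrix.kroneckerMap_apply, Matrix.one_apply_eq]
    · intro b' _ hne
      simp [Matrix.kroneckerMap_apply, Matrix.one_apply_ne hne]
    · intro h
      exact absurd (Finset.mem_univ b) h
  have rhs : ((Matrix.of fun k l => ∑ b, A (b, k) (b, l)) * τ).trace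
      = ∑ k : Fin d, ∑ l : Fin d, ∑ b : Fin m, A (b, k) (b, l) * τ l k := by
    rw [Matrix.trace]
    refine Finset.sum_congr rfl fun k _ => ?_
    rw [Matrix.diag_apply, Matrix.mul_apply]
    refine Finset.sum_congr rfl fun l _ => ?_
    rw [Matrix.of_apply, Finset.sum_mul]
  rw [lhs, rhs, Finset.sum_comm]
  exact Finset.sum_congr rfl fun k _ => Finset.sum_comm

lemma Mop_posSemidef (S : Matrix (Fin d) (Fin d) ℂ →ₗ[ℂ] Matrix (Fin m) (Fin m) ℂ) :
    (Mop S).PosSemidef := by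
  have h : Mop S = ∑ b : Fin m,
      (matAbs (choi S)).submatrix (fun k => (b, k)) (fun k => (b, k)) := by
    ext k l
    simp [Mop, Matrix.submatrix_apply, Matrix.sum_apply]
  rw [h]
  exact psd_sum _ _ fun b _ => (matAbs_posSemidef _).submatrix _

lemma Mop_trace (S : Matrix (Fin d) (Fin d) ℂ →ₗ[ℂ] Matrix (Fin m) (Fin m) ℂ) :
    (Mop S).trace = (matAbs (choi S)).trace := by
  have h1 : (Mop S).trace = ∑ k : Fin d, ∑ b : Fin m, matAbs (choi S) (b, k) (b, k) := by
    rw [Matrix.trace]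
    rfl
  rw [h1, Matrix.trace, Fintype.sum_prod_type, Finset.sum_comm]
  rfl

lemma term_le_pair (S : Matrix (Fin d) (Fin d) ℂ →ₗ[ℂ] Matrix (Fin m) (Fin m) ℂ)
    (hS : (choi S).IsHermitian) {σ : Matrix (Fin d) (Fin d) ℂ} (hσ : IsDensity σ) :
    traceNorm (((1 : Matrix (Fin m) (Fin m) ℂ) ⊗ₖ matSqrt σ) * choi S *
      ((1 : Matrix (Fin m) (Fin m) ℂ) ⊗ₖ matSqrt σ)) ≤ ((Mop S) * σ).trace.re := by
  have hs : matSqrt σ = hσ.1.sqrt := dif_pos hσ.1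
  have hsh : (matSqrt σ).IsHermitian := by rw [hs]; exact hσ.1.posSemidef_sqrt.1
  have hX : ((1 : Matrix (Fin m) (Fin m) ℂ) ⊗ₖ matSqrt σ).IsHermitian := kron_one_herm hsh
  refine (keyIneq hS hX).trans_eq ?_
  have hXX : ((1 : Matrix (Fin m) (Fin m) ℂ) ⊗ₖ matSqrt σ) *
      ((1 : Matrix (Fin m) (Fin m) ℂ) ⊗ₖ matSqrt σ) = (1 : Matrix (Fin m) (Fin m) ℂ) ⊗ₖ σ := by
    rw [← Matrix.mul_kronecker_mul, Matrix.one_mul, hs, hσ.1.sqrt_mul_self]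
  rw [hXX]
  have hpair : (matAbs (choi S) * ((1 : Matrix (Fin m) (Fin m) ℂ) ⊗ₖ σ)).trace
      = ((Mop S) * σ).trace := pairing (matAbs (choi S)) σ
  rw [hpair]

end Specific


/-- `‖S‖_⋄ = d·‖S‖_ME` iff there is a unit vector `φ` with
`M(S) = ‖J(S)‖₁ · φφᴴ`. -/
theorem stmt2 {d m : ℕ} (hd : 1 ≤ d)
    (S : Matrix (Fin d) (Fin d) ℂ →ₗ[ℂ] Matrix (Fin m) (Fin m) ℂ)
    (hS : (choi S).IsHermitian) :
    diamondNorm S = d * MENorm S ↔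
      ∃ φ : Fin d → ℂ, star φ ⬝ᵥ φ = 1 ∧
        Mop S = (traceNorm (choi S) : ℂ) • Matrix.vecMulVec φ (star φ) := by
  have hd0 : (d : ℝ) ≠ 0 := by
    have : (0 : ℕ) < d := hd
    exact_mod_cast this.ne'
  have hdme : (d : ℝ) * MENorm S = traceNorm (choi S) := by
    rw [MENorm, mul_comm, div_mul_cancel₀ _ hd0]
  have hM : (Mop S).PosSemidef := Mop_posSemidef S
  have htrM : (Mop S).trace.re = traceNorm (choi S) := by
    rw [Mop_trace]; rfl
  have hsum : ∑ i, hM.1.eigenvalues i = traceNorm (choi S) := by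
    have h1 : (Mop S).trace.re = ∑ i, hM.1.eigenvalues i := by
      rw [psd_trace_eq hM]; simp
    rw [← h1, htrM]
  obtain ⟨i₀, -, hmax⟩ := Finset.exists_max_image Finset.univ hM.1.eigenvalues
    ⟨(⟨0, hd⟩ : Fin d), Finset.mem_univ _⟩
  set lmax := hM.1.eigenvalues i₀ with hlmaxdef
  have hub : ∀ σ : {σ : Matrix (Fin d) (Fin d) ℂ // IsDensity σ},
      traceNorm (((1 : Matrix (Fin m) (Fin m) ℂ) ⊗ₖ matSqrt σ.1) * choi S *
        ((1 : Matrix (Fin m) (Fin m) ℂ) ⊗ₖ matSqrt σ.1)) ≤ lmax := fun σ =>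
    (term_le_pair S hS σ.2).trans
      (trace_mul_density_le hM σ.2 (fun i => hmax i (Finset.mem_univ i)))
  have hφ0 : star (Pi.single (⟨0, hd⟩ : Fin d) (1:ℂ)) ⬝ᵥ Pi.single (⟨0, hd⟩ : Fin d) (1:ℂ) = 1 := by
    simp [dotProduct, Pi.single_apply, apply_ite]
  have hne : Nonempty {σ : Matrix (Fin d) (Fin d) ℂ // IsDensity σ} :=
    ⟨⟨_, density_vecMulVec hφ0⟩⟩
  have hbdd : BddAbove (Set.range fun σ : {σ : Matrix (Fin d) (Fin d) ℂ // IsDensity σ} =>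
      traceNorm (((1 : Matrix (Fin m) (Fin m) ℂ) ⊗ₖ matSqrt σ.1) * choi S *
        ((1 : Matrix (Fin m) (Fin m) ℂ) ⊗ₖ matSqrt σ.1))) := by
    refine ⟨lmax, ?_⟩
    rintro x ⟨σ, rfl⟩
    exact hub σ
  have hDle : diamondNorm S ≤ lmax := by
    unfold diamondNorm
    exact ciSup_le hub
  have hlmax_le : lmax ≤ traceNorm (choi S) := by
    rw [← hsum]
    exact Finset.single_le_sum (fun i _ => hM.eigenvalues_nonneg i) (Finset.mem_univ i₀)
  constructor
  · intro h
    rw [hdme] at h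
    have h1 : traceNorm (choi S) ≤ lmax := h ▸ hDle
    have heq : lmax = traceNorm (choi S) := le_antisymm hlmax_le h1
    have hz : ∀ i, i ≠ i₀ → hM.1.eigenvalues i = 0 := by
      have hrest : ∑ j ∈ Finset.univ.erase i₀, hM.1.eigenvalues j = 0 := by
        have he : ∑ j, hM.1.eigenvalues j
            = lmax + ∑ j ∈ Finset.univ.erase i₀, hM.1.eigenvalues j :=
          (Finset.add_sum_erase Finset.univ _ (Finset.mem_univ i₀)).symm
        linarith [he, hsum, heq]
      intro i hne'
      have := (Finset.sum_eq_zero_iff_of_nonneg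
        (fun j _ => hM.eigenvalues_nonneg j)).1 hrest
      exact this i (Finset.mem_erase.2 ⟨hne', Finset.mem_univ i⟩)
    obtain ⟨φ, hφ, hMr⟩ := rank_one_of_eig hM i₀ hz
    exact ⟨φ, hφ, by rw [hMr, ← hlmaxdef, heq]⟩
  · rintro ⟨φ, hφ, hMr⟩
    rw [hdme]
    refine le_antisymm (hDle.trans hlmax_le) ?_
    set P := Matrix.vecMulVec φ (star φ) with hPdef
    have hPd : IsDensity P := density_vecMulVec hφ
    have hidem : P * P = P := vecMulVec_idem hφ
    have hKpsd : (matAbs (choi S)).PosSemidef := matAbs_posSemidef (choi S)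
    have htrK : (matAbs (choi S)).trace = ((traceNorm (choi S) : ℝ) : ℂ) :=
      psd_trace_ofReal_re hKpsd
    have hMP : (Mop S * P).trace = ((traceNorm (choi S) : ℝ) : ℂ) := by
      rw [hMr, Matrix.smul_mul, Matrix.trace_smul, hidem, hPd.2]
      simp
    have hpair : (matAbs (choi S) * ((1 : Matrix (Fin m) (Fin m) ℂ) ⊗ₖ P)).trace
        = ((Mop S) * P).trace := pairing (matAbs (choi S)) P
    set Q := (1 : Matrix (Fin m × Fin d) (Fin m × Fin d) ℂ) -
      (1 : Matrix (Fin m) (Fin m) ℂ) ⊗ₖ P with hQdef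
    have hXX : ((1 : Matrix (Fin m) (Fin m) ℂ) ⊗ₖ P) * ((1 : Matrix (Fin m) (Fin m) ℂ) ⊗ₖ P)
        = (1 : Matrix (Fin m) (Fin m) ℂ) ⊗ₖ P := by
      rw [← Matrix.mul_kronecker_mul, Matrix.one_mul, hidem]
    have hQherm : Q.IsHermitian := by
      rw [hQdef]
      exact Matrix.isHermitian_one.sub (kron_one_herm hPd.1.1)
    have hQidem : Q * Q = Q := by
      rw [hQdef, Matrix.sub_mul, Matrix.mul_sub, Matrix.mul_sub, Matrix.one_mul,
        Matrix.one_mul, Matrix.mul_one, hXX]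
      simp
    have hKQ : (matAbs (choi S) * Q).trace = 0 := by
      rw [hQdef, Matrix.mul_sub, Matrix.trace_sub, Matrix.mul_one, hpair, hMP, htrK, sub_self]
    have hQKQ : Q * matAbs (choi S) * Q = 0 := by
      have hpsd : (Q * matAbs (choi S) * Q).PosSemidef := by
        have h2 := hKpsd.conjTranspose_mul_mul_same Q
        rwa [hQherm] at h2
      refine psd_trace_zero_eq_zero hpsd ?_
      have h0 : (Q * matAbs (choi S) * Q).trace = 0 := by
        rw [Matrix.trace_mul_cycle, hQidem, Matrix.trace_mul_comm, hKQ]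
      rw [h0]
      rfl
    have hKQ0 : matAbs (choi S) * Q = 0 := by
      have hRR : hKpsd.sqrt * hKpsd.sqrt = matAbs (choi S) := hKpsd.sqrt_mul_self
      have hRh : (hKpsd.sqrt)ᴴ = hKpsd.sqrt := hKpsd.posSemidef_sqrt.1
      have h1 : (hKpsd.sqrt * Q)ᴴ * (hKpsd.sqrt * Q) = Q * matAbs (choi S) * Q := by
        rw [Matrix.conjTranspose_mul, hRh, hQherm]
        calc Q * hKpsd.sqrt * (hKpsd.sqrt * Q)
            = Q * (hKpsd.sqrt * hKpsd.sqrt) * Q := by simp only [Matrix.mul_assoc]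
          _ = Q * matAbs (choi S) * Q := by rw [hRR]
      have h2 : hKpsd.sqrt * Q = 0 :=
        Matrix.conjTranspose_mul_self_eq_zero.1 (by rw [h1, hQKQ])
      calc matAbs (choi S) * Q = hKpsd.sqrt * (hKpsd.sqrt * Q) := by
            rw [← Matrix.mul_assoc, hRR]
        _ = 0 := by rw [h2, Matrix.mul_zero]
    have hJQ0 : choi S * Q = 0 := by
      have h1 : (choi S * Q)ᴴ * (choi S * Q) = 0 := by
        rw [Matrix.conjTranspose_mul, hQherm, hS]
        calc Q * choi S * (choi S * Q)
            = Q * ((choi S)ᴴ * choi S) * Q := by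
              rw [hS]; simp only [Matrix.mul_assoc]
          _ = Q * (matAbs (choi S) * (matAbs (choi S) * Q)) := by
              rw [← matAbs_mul_self]; simp only [Matrix.mul_assoc]
          _ = 0 := by rw [hKQ0, Matrix.mul_zero, Matrix.mul_zero]
      exact Matrix.conjTranspose_mul_self_eq_zero.1 h1
    have hJP : choi S * ((1 : Matrix (Fin m) (Fin m) ℂ) ⊗ₖ P) = choi S := by
      have h1 := hJQ0
      rw [hQdef, Matrix.mul_sub, Matrix.mul_one, sub_eq_zero] at h1
      exact h1.symm
    have hPJ : ((1 : Matrix (Fin m) (Fin m) ℂ) ⊗ₖ P) * choi S = choi S := by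
      have h1 := congrArg Matrix.conjTranspose hJP
      rwa [Matrix.conjTranspose_mul, hS, (kron_one_herm hPd.1.1 :
        ((1 : Matrix (Fin m) (Fin m) ℂ) ⊗ₖ P)ᴴ = _)] at h1
    have hsqrtP : matSqrt P = P := matSqrt_proj hPd.1 hidem
    have hterm : ((1 : Matrix (Fin m) (Fin m) ℂ) ⊗ₖ matSqrt P) * choi S *
        ((1 : Matrix (Fin m) (Fin m) ℂ) ⊗ₖ matSqrt P) = choi S := by
      rw [hsqrtP, hPJ, hJP]
    have hlow := le_ciSup hbdd (⟨P, hPd⟩ : {σ : Matrix (Fin d) (Fin d) ℂ // IsDensity σ})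
    unfold diamondNorm
    simp only at hlow
    rw [hterm] at hlow
    exact hlow

end
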